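/- Let n > 1 be square-free and let q be a positive prime not dividing n. Then Ψ(nq) ≥ (q − 1)·Ψ(n), where Ψ(m) denotes the maximal cardinality of a quasi-independent subset of the m-th roots of unity. -/

import Mathlib

set_option synthInstance.maxHeartbeats 1000000
set_option maxHeartbeats 1000000

open Polynomial IntermediateField Module

def QuasiIndep (S : Set ℂ) : Prop :=
  ∀ (s : Finset ℂ) (ε : ℂ → ℤ), ↑s ⊆ S →
    (∀ z ∈ s, ε z = 0 ∨ ε z = 1 ∨ ε z = -1) →
    (∑ z ∈ s, (ε z : ℂ) * z) = 0 → ∀ z ∈ s, ε z = 0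

/-- `Psi N` is the maximal cardinality of a quasi-independent set of N-th roots of unity. -/
noncomputable def Psi (N : ℕ) : ℕ :=
  sSup {k | ∃ E : Finset ℂ, (∀ z ∈ E, z ^ N = 1) ∧ QuasiIndep ↑E ∧ E.card = k}

lemma isInt (m : ℕ) (hm : m ≠ 0) (z : ℂ) (hz : z ^ m = 1) : IsIntegral ℚ z :=
  ⟨X ^ m - C 1, monic_X_pow_sub_C 1 hm, by simp [hz]⟩

lemma finrank_adjoin (m : ℕ) (hm : 0 < m) (ζ : ℂ) (hζ : IsPrimitiveRoot ζ m) :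
    finrank ℚ ℚ⟮ζ⟯ = m.totient := by
  rw [adjoin.finrank (isInt m hm.ne' ζ hζ.pow_eq_one), ← cyclotomic_eq_minpoly_rat hζ hm,
    natDegree_cyclotomic]

lemma key {n q : ℕ} (hn : 0 < n) (hqp : q.Prime) (hcop : n.Coprime q)
    {ζnq : ℂ} (hζnq : IsPrimitiveRoot ζnq (n * q)) :
    LinearIndependent (ℚ⟮ζnq ^ q⟯) (fun j : Fin (q - 1) => (ζnq ^ n) ^ (j : ℕ)) := by
  have hζn : IsPrimitiveRoot (ζnq ^ q) n := hζnq.pow (Nat.mul_pos hn hqp.pos) (mul_comm n q)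
  have hζq : IsPrimitiveRoot (ζnq ^ n) q := hζnq.pow (Nat.mul_pos hn hqp.pos) rfl
  set ζn := ζnq ^ q with hzn
  set ζq := ζnq ^ n with hzq
  have hfield : (ℚ⟮ζn⟯⟮ζq⟯).restrictScalars ℚ = ℚ⟮ζnq⟯ := by
    erw [adjoin_adjoin_left]
    apply le_antisymm
    · rw [adjoin_le_iff]
      rintro x (rfl | rfl) <;>
        exact pow_mem (mem_adjoin_simple_self ℚ ζnq) _
    · rw [adjoin_le_iff, Set.singleton_subset_iff]
      obtain ⟨u, v, huv⟩ : IsCoprime (n : ℤ) q := by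
        rw [Int.isCoprime_iff_gcd_eq_one]; exact_mod_cast hcop
      have : ζnq = ζq ^ u * ζn ^ v := by
        rw [hzn, hzq, ← zpow_natCast ζnq n, ← zpow_natCast ζnq q, ← zpow_mul, ← zpow_mul,
          ← zpow_add₀ (hζnq.ne_zero (Nat.mul_pos hn hqp.pos).ne')]
        rw [show (n:ℤ) * u + (q:ℤ) * v = 1 by linarith]
        simp
      rw [this]
      exact mul_mem (zpow_mem (subset_adjoin ℚ _ (by simp)) u)
        (zpow_mem (subset_adjoin ℚ _ (by simp)) v)
  have hint : IsIntegral (ℚ⟮ζn⟯) ζq :=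
    (isInt q hqp.pos.ne' ζq hζq.pow_eq_one).tower_top
  have h1 : finrank ℚ ℚ⟮ζn⟯ = n.totient := finrank_adjoin n hn ζn hζn
  have h2 : finrank ℚ ℚ⟮ζnq⟯ = (n*q).totient := finrank_adjoin (n*q) (Nat.mul_pos hn hqp.pos) ζnq hζnq
  have htow : finrank ℚ ℚ⟮ζn⟯ * finrank ℚ⟮ζn⟯ (ℚ⟮ζn⟯⟮ζq⟯) = finrank ℚ ((ℚ⟮ζn⟯⟮ζq⟯).restrictScalars ℚ) :=
    Module.finrank_mul_finrank ℚ ℚ⟮ζn⟯ (ℚ⟮ζn⟯⟮ζq⟯)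
  have hdeg : (minpoly (ℚ⟮ζn⟯) ζq).natDegree = q - 1 := by
    rw [← adjoin.finrank hint]
    have : finrank ℚ ℚ⟮ζn⟯ * finrank ℚ⟮ζn⟯ (ℚ⟮ζn⟯⟮ζq⟯) = n.totient * (q - 1) := by
      rw [htow, hfield, h2, Nat.totient_mul hcop, Nat.totient_prime hqp]
    rw [h1] at this
    exact Nat.eq_of_mul_eq_mul_left (Nat.totient_pos.2 hn) this
  have li := linearIndependent_pow (K := ℚ⟮ζn⟯) (S := ℂ) ζq
  rw [hdeg] at li
  exact li

lemma main_construct {n q : ℕ} (hn : 1 < n) (hqp : q.Prime) (hqn : ¬ q ∣ n)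
    (E : Finset ℂ) (hE : ∀ z ∈ E, z ^ n = 1) (hqi : QuasiIndep ↑E) :
    ∃ E' : Finset ℂ, (∀ z ∈ E', z ^ (n * q) = 1) ∧ QuasiIndep ↑E' ∧
      E'.card = (q - 1) * E.card := by
  have hn0 : 0 < n := by omega
  have hq1 : 1 < q := hqp.one_lt
  have hcop : n.Coprime q := Nat.Coprime.symm (hqp.coprime_iff_not_dvd.2 hqn)
  have hnq0 : (n * q : ℕ) ≠ 0 := by positivity
  set ζnq : ℂ := Complex.exp (2 * Real.pi * Complex.I / (n * q)) with hζnqdef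
  have hζnq : IsPrimitiveRoot ζnq (n * q) := by
    convert Complex.isPrimitiveRoot_exp (n * q) hnq0 using 2
    push_cast; ring
  set ζn : ℂ := ζnq ^ q with hζndef
  set ζq : ℂ := ζnq ^ n with hζqdef
  have hζn : IsPrimitiveRoot ζn n := hζnq.pow (by positivity) (mul_comm n q)
  have hζq : IsPrimitiveRoot ζq q := hζnq.pow (by positivity) rfl
  haveI : NeZero n := ⟨hn0.ne'⟩
  set K := ℚ⟮ζn⟯ with hK
  have hmemK : ∀ z ∈ E, z ∈ K := by
    intro z hz
    obtain ⟨i, _, rfl⟩ := hζn.eq_pow_of_pow_eq_one (hE z hz)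
    exact pow_mem (mem_adjoin_simple_self ℚ ζn) i
  set f : ℕ × ℂ → ℂ := fun p => ζq ^ p.1 * p.2 with hf
  have hinj : ∀ p₁ ∈ (Finset.Ioo 0 q) ×ˢ E, ∀ p₂ ∈ (Finset.Ioo 0 q) ×ˢ E,
      f p₁ = f p₂ → p₁ = p₂ := by
    rintro ⟨a, z⟩ hp1 ⟨b, w⟩ hp2 hfe
    simp only [Finset.mem_product, Finset.mem_Ioo] at hp1 hp2
    have hz1 : z ^ n = 1 := hE z hp1.2
    have hw1 : w ^ n = 1 := hE w hp2.2
    have hpow : ζq ^ (a * n) = ζq ^ (b * n) := by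
      have := congrArg (· ^ n) hfe
      simpa [hf, mul_pow, ← pow_mul, hz1, hw1, mul_comm n a, mul_comm n b] using this
    have hdvd : ∀ a' b' : ℕ, a' ≤ b' → ζq ^ (a' * n) = ζq ^ (b' * n) → q ∣ b' - a' := by
      intro a' b' hab h
      have hsplit : ζq ^ (b' * n) = ζq ^ (a' * n) * ζq ^ ((b' - a') * n) := by
        rw [← pow_add]
        congr 1
        have : a' * n + (b' - a') * n = (a' + (b' - a')) * n := by ring
        rw [this, Nat.add_sub_cancel' hab]
      have hone : ζq ^ ((b' - a') * n) = 1 := by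
        have hne : ζq ^ (a' * n) ≠ 0 := pow_ne_zero _ (hζq.ne_zero hqp.pos.ne')
        have h2 : ζq ^ (a' * n) * ζq ^ ((b' - a') * n) = ζq ^ (a' * n) * 1 := by
          rw [mul_one, ← hsplit, h]
        exact mul_left_cancel₀ hne h2
      have := (hζq.pow_eq_one_iff_dvd _).1 hone
      exact (Nat.Coprime.dvd_of_dvd_mul_right hcop.symm this)
    have hab : a = b := by
      rcases le_total a b with h | h
      · have := hdvd a b h hpow
        have := Nat.eq_zero_of_dvd_of_lt this (by omega)
        omega
      · have := hdvd b a h hpow.symm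
        have h2 := this
        rcases Nat.eq_zero_or_pos (a - b) with h3 | h3
        · omega
        · have := Nat.le_of_dvd h3 h2
          omega
    subst hab
    have hzw : z = w := by
      have hne : ζq ^ a ≠ 0 := pow_ne_zero _ (hζq.ne_zero hqp.pos.ne')
      exact mul_left_cancel₀ hne hfe
    rw [hzw]
  set E' : Finset ℂ := ((Finset.Ioo 0 q) ×ˢ E).image f with hE'
  refine ⟨E', ?_, ?_, ?_⟩
  · intro x hx
    simp only [hE', Finset.mem_image] at hx
    obtain ⟨⟨a, z⟩, hp, rfl⟩ := hx
    simp only [Finset.mem_product] at hp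
    have hz1 : z ^ n = 1 := hE z hp.2
    calc (ζq ^ a * z) ^ (n * q) = ((ζq ^ q) ^ (n * a)) * ((z ^ n) ^ q) := by
          ring
      _ = 1 := by rw [hζq.pow_eq_one, hz1]; simp
  · -- quasi-independence
    intro s ε hs hε hsum
    set ε' : ℂ → ℤ := fun x => if x ∈ s then ε x else 0 with hε'
    have hε'val : ∀ x, ε' x = 0 ∨ ε' x = 1 ∨ ε' x = -1 := by
      intro x
      by_cases hx : x ∈ s
      · simpa [hε', hx] using hε x hx
      · simp [hε', hx]
    have hssub : s ⊆ E' := by exact_mod_cast hs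
    -- rewrite the relation as a sum over the product
    have hR : ∑ p ∈ (Finset.Ioo 0 q) ×ˢ E, (ε' (f p) : ℂ) * f p = 0 := by
      have him := Finset.sum_image (f := fun x => (ε' x : ℂ) * x) (g := f) hinj
      rw [← him]
      rw [← Finset.sum_subset hssub (by intro x _ hxs; simp [hε', hxs])]
      rw [← hsum]
      exact Finset.sum_congr rfl (fun x hx => by simp [hε', hx])
    set D : ℕ → ℂ → ℤ := fun a z => if a = 0 then 0 else ε' (ζq ^ a * z) with hD
    set c : ℂ → ℤ := fun z => ε' (ζq ^ (q - 1) * z) with hc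
    have hR0 : ∑ a ∈ Finset.range q, ∑ z ∈ E, (D a z : ℂ) * (ζq ^ a * z) = 0 := by
      have hsub : ∑ a ∈ Finset.Ioo 0 q, ∑ z ∈ E, (D a z : ℂ) * (ζq ^ a * z)
          = ∑ a ∈ Finset.range q, ∑ z ∈ E, (D a z : ℂ) * (ζq ^ a * z) := by
        refine Finset.sum_subset (fun a ha => Finset.mem_range.2 (Finset.mem_Ioo.1 ha).2) ?_
        intro a ha has
        have ha0 : a = 0 := by
          simp only [Finset.mem_range] at ha
          simp only [Finset.mem_Ioo] at has
          omega
        subst ha0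
        simp [hD]
      rw [← hsub]
      rw [← hR, Finset.sum_product]
      refine Finset.sum_congr rfl (fun a ha => Finset.sum_congr rfl (fun z hz => ?_))
      simp only [Finset.mem_Ioo] at ha
      simp only [hD, hf, if_neg (by omega : ¬ a = 0)]
    have hgeom : ∑ a ∈ Finset.range q, ζq ^ a = 0 := hζq.geom_sum_eq_zero hq1
    have hR1 : ∑ a ∈ Finset.range q, ∑ z ∈ E, (c z : ℂ) * (ζq ^ a * z) = 0 := by
      rw [Finset.sum_comm]
      have : ∀ z ∈ E, ∑ a ∈ Finset.range q, (c z : ℂ) * (ζq ^ a * z)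
          = ((c z : ℂ) * z) * ∑ a ∈ Finset.range q, ζq ^ a := by
        intro z _
        rw [Finset.mul_sum]
        exact Finset.sum_congr rfl (fun a _ => by ring)
      rw [Finset.sum_congr rfl this]
      simp [hgeom]
    have hR2 : ∑ a ∈ Finset.range q, ∑ z ∈ E, ((D a z - c z : ℤ) : ℂ) * (ζq ^ a * z) = 0 := by
      have : ∀ a ∈ Finset.range q, ∑ z ∈ E, ((D a z - c z : ℤ) : ℂ) * (ζq ^ a * z)
          = (∑ z ∈ E, (D a z : ℂ) * (ζq ^ a * z)) - ∑ z ∈ E, (c z : ℂ) * (ζq ^ a * z) := by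
        intro a _
        rw [← Finset.sum_sub_distrib]
        exact Finset.sum_congr rfl (fun z _ => by push_cast; ring)
      rw [Finset.sum_congr rfl this, Finset.sum_sub_distrib, hR0, hR1, sub_zero]
    have hq1' : q - 1 ≠ 0 := by omega
    have hR3 : ∑ a ∈ Finset.range (q - 1), ∑ z ∈ E, ((D a z - c z : ℤ) : ℂ) * (ζq ^ a * z) = 0 := by
      have hqsucc : q = (q - 1) + 1 := by omega
      rw [hqsucc, Finset.sum_range_succ] at hR2
      have hlast : ∑ z ∈ E, ((D (q - 1) z - c z : ℤ) : ℂ) * (ζq ^ (q - 1) * z) = 0 := by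
        refine Finset.sum_eq_zero (fun z _ => ?_)
        have : D (q - 1) z = c z := by simp [hD, hc, hq1']
        simp [this]
      rw [hlast, add_zero] at hR2
      exact hR2
    -- package into K-linear combination
    set W : Fin (q - 1) → K := fun j =>
      ⟨∑ z ∈ E, ((D (j : ℕ) z - c z : ℤ) : ℂ) * z,
        K.sum_mem (fun z hz => mul_mem (K.intCast_mem _) (hmemK z hz))⟩ with hW
    have hWsum : ∑ j : Fin (q - 1), (W j : ℂ) * ζq ^ (j : ℕ) = 0 := by
      rw [← hR3, ← Fin.sum_univ_eq_sum_range (fun a => ∑ z ∈ E, ((D a z - c z : ℤ) : ℂ) * (ζq ^ a * z))]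
      refine Finset.sum_congr rfl (fun j _ => ?_)
      simp only [hW]
      rw [Finset.sum_mul]
      exact Finset.sum_congr rfl (fun z _ => by ring)
    have hWzero : ∀ j, W j = 0 := by
      have li := key hn0 hqp hcop hζnq
      rw [Fintype.linearIndependent_iff] at li
      refine li W ?_
      rw [← hWsum]
      refine Finset.sum_congr rfl (fun j _ => ?_)
      rw [Algebra.smul_def]
      rfl
    have hWzero' : ∀ j : Fin (q - 1), ∑ z ∈ E, ((D (j : ℕ) z - c z : ℤ) : ℂ) * z = 0 := by
      intro j
      have := congrArg (Subtype.val) (hWzero j)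
      simpa [hW] using this
    -- first application: coefficient of ζq^0 kills c
    have hczero : ∀ z ∈ E, c z = 0 := by
      have h0 := hWzero' ⟨0, by omega⟩
      have happ := hqi E (fun z => D 0 z - c z) (by simp)
        (fun z hz => by
          have h1 := hε'val (ζq ^ (q - 1) * z)
          simp only [hD, hc, if_pos rfl, zero_sub]
          omega)
        (by simpa using h0)
      intro z hz
      have h2 := happ z hz
      simp only [hD, if_pos rfl, zero_sub, neg_eq_zero] at h2
      exact h2
    have hDzero : ∀ a ∈ Finset.Ioo 0 q, ∀ z ∈ E, ε' (ζq ^ a * z) = 0 := by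
      intro a ha z hz
      simp only [Finset.mem_Ioo] at ha
      by_cases haq : a = q - 1
      · subst haq; exact hczero z hz
      · have haq' : a < q - 1 := by omega
        have h0 := hWzero' ⟨a, haq'⟩
        have happ := hqi E (fun z => D a z - c z) (by simp)
          (fun w hw => by
            have h1 := hε'val (ζq ^ a * w)
            have h2 := hczero w hw
            simp only [hc] at h2
            simp only [hD, hc, if_neg (by omega : ¬ a = 0)]
            omega)
          (by simpa using h0)
        have h3 := happ z hz
        have hca := hczero z hz
        simp only [hc] at hca
        simp only [hD, hc, if_neg (by omega : ¬ a = 0)] at h3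
        omega
    intro x hx
    have hxE' := hssub hx
    simp only [hE', Finset.mem_image] at hxE'
    obtain ⟨⟨a, z⟩, hp, rfl⟩ := hxE'
    simp only [Finset.mem_product] at hp
    have := hDzero a hp.1 z hp.2
    show ε (ζq ^ a * z) = 0
    have hx' : ζq ^ a * z ∈ s := hx
    simpa [hε', hx'] using this
  · rw [Finset.card_image_of_injOn (fun p hp p' hp' h =>
        hinj p (Finset.mem_coe.1 hp) p' (Finset.mem_coe.1 hp') h),
      Finset.card_product, Nat.card_Ioo]
    simp

lemma mem_psi_zero (N : ℕ) :
    0 ∈ {k | ∃ E : Finset ℂ, (∀ z ∈ E, z ^ N = 1) ∧ QuasiIndep ↑E ∧ E.card = k} :=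
  ⟨∅, by simp, fun s ε hs _ _ z hz => absurd (hs hz) (by simp), rfl⟩

lemma psi_bdd (N : ℕ) (hN : 0 < N) :
    BddAbove {k | ∃ E : Finset ℂ, (∀ z ∈ E, z ^ N = 1) ∧ QuasiIndep ↑E ∧ E.card = k} := by
  refine ⟨N, fun k hk => ?_⟩
  obtain ⟨E, hE, _, rfl⟩ := hk
  have hsub : E ⊆ Polynomial.nthRootsFinset N (1 : ℂ) := fun z hz =>
    (Polynomial.mem_nthRootsFinset hN 1).2 (hE z hz)
  calc E.card ≤ (Polynomial.nthRootsFinset N (1 : ℂ)).card := Finset.card_le_card hsub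
    _ ≤ Multiset.card (Polynomial.nthRoots N (1 : ℂ)) := Multiset.toFinset_card_le _
    _ ≤ N := Polynomial.card_nthRoots N 1

theorem stmt_3 (n q : ℕ) (hn : 1 < n) (hsf : Squarefree n)
    (hq : q.Prime) (hqn : ¬ q ∣ n) :
    (q - 1) * Psi n ≤ Psi (n * q) := by
  obtain ⟨E, hE, hqi, hcard⟩ := Nat.sSup_mem ⟨0, mem_psi_zero n⟩ (psi_bdd n (by omega))
  obtain ⟨E', h1, h2, h3⟩ := main_construct hn hq hqn E hE hqi
  exact le_csSup (psi_bdd (n * q) (Nat.mul_pos (by omega) hq.pos)) ⟨E', h1, h2, by rw [h3, hcard]; rfl⟩
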